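/- If F is a winning team, then F contains a skinny polyomino, i.e., some element of F has all of its cells lying in a single row or a single column of ℤ². -/

import Mathlib

/-- A cell of the rectangular board. -/
abbrev Cell : Type := ℤ × ℤ

/-- Two cells are adjacent if they differ by (±1,0) or (0,±1). -/
def Adjacent (a b : Cell) : Prop :=
  (a.1 - b.1).natAbs + (a.2 - b.2).natAbs = 1

/-- A polyomino is a nonempty subset of ℤ² connected through adjacent cells. -/
def IsPolyomino (P : Set Cell) : Prop :=
  P.Nonempty ∧ ∀ a ∈ P, ∀ b ∈ P,
    Relation.ReflTransGen (fun x y => x ∈ P ∧ y ∈ P ∧ Adjacent x y) a b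

/-- Symmetries of the board: compositions of an integer translation with one of the
eight signed/swap linear maps (rotations by multiples of 90° and reflections). -/
def IsSym (f : Cell → Cell) : Prop :=
  ∃ (t : Cell) (a b s : Bool), ∀ p : Cell,
    f p = (t.1 + (if a then (if s then p.2 else p.1) else -(if s then p.2 else p.1)),
           t.2 + (if b then (if s then p.1 else p.2) else -(if s then p.1 else p.2)))

/-- Two subsets of ℤ² are congruent if one is the image of the other under a symmetry. -/
def CellCongruent (A B : Set Cell) : Prop := ∃ f, IsSym f ∧ f '' A = B

/-- `Ancestor P Q` (written P ⊑ Q): `Q` contains a subset congruent to `P`. -/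
def Ancestor (P Q : Set Cell) : Prop := ∃ S, S ⊆ Q ∧ CellCongruent P S

/-- `Simpler S T` (written S ⪯ T): every member of `T` has an ancestor in `S`. -/
def Simpler (S T : Set (Set Cell)) : Prop := ∀ Q ∈ T, ∃ P ∈ S, Ancestor P Q

/-- A team: a set of polyominoes no member of which is an ancestor of another member. -/
def IsTeam (F : Set (Set Cell)) : Prop :=
  (∀ P ∈ F, IsPolyomino P) ∧ ∀ P ∈ F, ∀ Q ∈ F, P ≠ Q → ¬ Ancestor P Q

/-- The cells marked so far, given the list of the maker's moves and
the list of the breaker's (pairs of) moves. -/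
def markedCells (ms : List Cell) (bs : List (Cell × Cell)) : Set Cell :=
  {c | c ∈ ms ∨ ∃ p ∈ bs, c = p.1 ∨ c = p.2}

/-- Maker strategy: from the maker's past moves and the breaker's past moves,
produce the maker's next mark. -/
abbrev MStrategy := List Cell → List (Cell × Cell) → Cell

/-- Breaker strategy: from the maker's moves so far (including his latest one) and the
breaker's past moves, produce the breaker's next two marks. -/
abbrev BStrategy := List Cell → List (Cell × Cell) → Cell × Cell

/-- A legal maker strategy always marks a previously unmarked cell. -/
def MLegal (σ : MStrategy) : Prop := ∀ ms bs, σ ms bs ∉ markedCells ms bs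

/-- A legal breaker strategy always marks two distinct previously unmarked cells. -/
def BLegal (τ : BStrategy) : Prop :=
  ∀ ms bs, (τ ms bs).1 ≠ (τ ms bs).2 ∧
    (τ ms bs).1 ∉ markedCells ms bs ∧ (τ ms bs).2 ∉ markedCells ms bs

/-- The lists of moves after `n` full rounds of the weak (1,2)-achievement game,
the maker moving first in each round. -/
def play (σ : MStrategy) (τ : BStrategy) : ℕ → List Cell × List (Cell × Cell)
  | 0 => ([], [])
  | n + 1 =>
      let p := play σ τ n
      let mv := σ p.1 p.2
      (p.1 ++ [mv], p.2 ++ [τ (p.1 ++ [mv]) p.2])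

/-- The set of cells marked by the maker during the first `n` rounds. -/
def makerSet (σ : MStrategy) (τ : BStrategy) (n : ℕ) : Set Cell :=
  {c | c ∈ (play σ τ n).1}

/-- The maker achieves `F` in the play of `σ` against `τ`: at some finite stage his
marked cells contain a subset congruent to a member of `F`. -/
def Achieves (F : Set (Set Cell)) (σ : MStrategy) (τ : BStrategy) : Prop :=
  ∃ n, ∃ Q ∈ F, Ancestor Q (makerSet σ τ n)

/-- A (bounded) set of polyominoes is a winner of the weak (1,2)-achievement game if the
maker has a legal strategy achieving it against every legal breaker strategy. -/
def GameWinner (F : Set (Set Cell)) : Prop :=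
  ∃ σ, MLegal σ ∧ ∀ τ, BLegal τ → Achieves F σ τ

/-- A set of polyominoes is bounded if all its members are finite. -/
def Bounded (F : Set (Set Cell)) : Prop := ∀ P ∈ F, P.Finite

/-- `G` is a bounded restriction of `T`: `G = {F_P : P ∈ T}` for a choice of a finite
polyomino ancestor `F_P ⊑ P` for each `P ∈ T`. -/
def BoundedRestriction (T G : Set (Set Cell)) : Prop :=
  ∃ f : Set Cell → Set Cell,
    (∀ P ∈ T, (f P).Finite ∧ IsPolyomino (f P) ∧ Ancestor (f P) P) ∧ G = f '' T

/-- Winner for a possibly unbounded set of polyominoes: a bounded set is a winner if the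
maker can achieve it; an unbounded set is a winner if every bounded restriction is. -/
def Winner (F : Set (Set Cell)) : Prop :=
  (Bounded F ∧ GameWinner F) ∨
  (¬ Bounded F ∧ ∀ G, BoundedRestriction F G → GameWinner G)

/-- The skinny polyomino `S_n`: `n` cells in a horizontal row. -/
def Srow (n : ℕ) : Set Cell := {p | 0 ≤ p.1 ∧ p.1 < (n : ℤ) ∧ p.2 = 0}

/-- The one-way infinite skinny polyomino `S_∞`. -/
def Sinf : Set Cell := {p | 0 ≤ p.1 ∧ p.2 = 0}

/-- The L-tromino `L_2`. -/
def L2 : Set Cell := {(0, 0), (1, 0), (1, 1)}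

/-- The L-tetromino `L_3`. -/
def L3 : Set Cell := {(0, 0), (1, 0), (2, 0), (2, 1)}

/-- The T-tetromino `T_2`. -/
def T2 : Set Cell := {(0, 0), (1, 0), (2, 0), (1, 1)}

/-- The 2×2 square tetromino `C_2`. -/
def C2 : Set Cell := {(0, 0), (1, 0), (0, 1), (1, 1)}

/-- The S-tetromino `Z_2`. -/
def Z2 : Set Cell := {(0, 0), (1, 0), (1, 1), (2, 1)}

/-- `C_n`: a horizontal row of `n` cells plus the cells above its two end cells. -/
def Cpoly (n : ℕ) : Set Cell :=
  {p | 0 ≤ p.1 ∧ p.1 < (n : ℤ) ∧ p.2 = 0} ∪ {(0, 1), ((n : ℤ) - 1, 1)}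

/-- `Z_n`: a horizontal row of `n` cells plus the cell above one end cell and the cell
below the other end cell. -/
def Zpoly (n : ℕ) : Set Cell :=
  {p | 0 ≤ p.1 ∧ p.1 < (n : ℤ) ∧ p.2 = 0} ∪ {(0, 1), ((n : ℤ) - 1, -1)}

/-- A polyomino is skinny if all its cells lie in one row or one column. -/
def Skinny (P : Set Cell) : Prop :=
  (∃ r, ∀ p ∈ P, p.2 = r) ∨ (∃ c, ∀ p ∈ P, p.1 = c)

/-- A 2-paving: an irreflexive symmetric relation on cells in which every cell is
related to at most two other cells. -/
def TwoPaving (R : Cell → Cell → Prop) : Prop :=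
  (∀ a, ¬ R a a) ∧ (∀ a b, R a b → R b a) ∧
  ∀ a, ∃ b c, ∀ d, R a d → d = b ∨ d = c

/-- The paving strategy based on `R`: a legal breaker strategy that marks every currently
unmarked cell related by `R` to the maker's last move. -/
def PavingStrategy (R : Cell → Cell → Prop) (τ : BStrategy) : Prop :=
  BLegal τ ∧ ∀ ms bs, ∀ last ∈ ms.getLast?, ∀ c, R last c →
    c ∉ markedCells ms bs → (c = (τ ms bs).1 ∨ c = (τ ms bs).2)

/-- `Q` is killed by `R`: every subset of ℤ² congruent to `Q` contains two related cells. -/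
def Killed (R : Cell → Cell → Prop) (Q : Set Cell) : Prop :=
  ∀ S : Set Cell, CellCongruent Q S → ∃ a ∈ S, ∃ b ∈ S, R a b

/-- The unbounded team `W = {S_∞, T_2} ∪ {C_n : n ≥ 2} ∪ {Z_n : n ≥ 2}`. -/
def Wteam : Set (Set Cell) :=
  {Sinf, T2} ∪ {P | ∃ n, 2 ≤ n ∧ P = Cpoly n} ∪ {P | ∃ n, 2 ≤ n ∧ P = Zpoly n}

/-! ### Auxiliary machinery -/

section Aux

lemma marked_finite (ms : List Cell) (bs : List (Cell × Cell)) :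
    (markedCells ms bs).Finite := by
  have h : markedCells ms bs ⊆
      {c | c ∈ ms} ∪ ({c | c ∈ bs.map Prod.fst} ∪ {c | c ∈ bs.map Prod.snd}) := by
    rintro c hc
    rcases hc with h | ⟨p, hp, h | h⟩
    · exact Or.inl h
    · exact Or.inr (Or.inl (List.mem_map.mpr ⟨p, hp, h.symm⟩))
    · exact Or.inr (Or.inr (List.mem_map.mpr ⟨p, hp, h.symm⟩))
  exact Set.Finite.subset ((ms.finite_toSet).union
    (((bs.map Prod.fst).finite_toSet).union ((bs.map Prod.snd).finite_toSet))) h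

lemma fresh_pair (M : Set Cell) (hM : M.Finite) (a b : Cell) (hab : a ≠ b) :
    ∃ pr : Cell × Cell, pr.1 ≠ pr.2 ∧ pr.1 ∉ M ∧ pr.2 ∉ M ∧
      ∀ c, (c = a ∨ c = b) → c ∉ M → (c = pr.1 ∨ c = pr.2) := by
  by_cases ha : a ∈ M <;> by_cases hb : b ∈ M
  · obtain ⟨p, hp⟩ := hM.infinite_compl.nonempty
    obtain ⟨q, hq⟩ := ((hM.union (Set.finite_singleton p)).infinite_compl).nonempty
    rw [Set.compl_union, Set.mem_inter_iff] at hq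
    refine ⟨(p, q), ?_, hp, hq.1, ?_⟩
    · intro h; exact hq.2 (by simpa using h.symm)
    · rintro c (rfl | rfl) hc <;> exact absurd ‹_› hc
  · obtain ⟨q, hq⟩ := ((hM.union (Set.finite_singleton b)).infinite_compl).nonempty
    rw [Set.compl_union, Set.mem_inter_iff] at hq
    refine ⟨(b, q), ?_, hb, hq.1, ?_⟩
    · intro h; exact hq.2 (by simpa using h.symm)
    · rintro c (rfl | rfl) hc
      · exact absurd ha hc
      · exact Or.inl rfl
  · obtain ⟨q, hq⟩ := ((hM.union (Set.finite_singleton a)).infinite_compl).nonempty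
    rw [Set.compl_union, Set.mem_inter_iff] at hq
    refine ⟨(a, q), ?_, ha, hq.1, ?_⟩
    · intro h; exact hq.2 (by simpa using h.symm)
    · rintro c (rfl | rfl) hc
      · exact Or.inl rfl
      · exact absurd hb hc
  · exact ⟨(a, b), hab, ha, hb, fun c hc _ => hc⟩

/-- The breaker's paving strategy: mark the two horizontal neighbours of the maker's
last move (replaced by fresh cells when already marked). -/
lemma pavEx (ms : List Cell) (bs : List (Cell × Cell)) :
    ∃ pr : Cell × Cell, pr.1 ≠ pr.2 ∧ pr.1 ∉ markedCells ms bs ∧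
      pr.2 ∉ markedCells ms bs ∧
      ∀ c, (c = ((ms.getLastD (0, 0)).1 + 1, (ms.getLastD (0, 0)).2) ∨
            c = ((ms.getLastD (0, 0)).1 - 1, (ms.getLastD (0, 0)).2)) →
        c ∉ markedCells ms bs → (c = pr.1 ∨ c = pr.2) :=
  fresh_pair (markedCells ms bs) (marked_finite ms bs) _ _
    (by simp [Prod.ext_iff]; omega)

noncomputable def pav : BStrategy := fun ms bs => Classical.choose (pavEx ms bs)

lemma pav_spec (ms : List Cell) (bs : List (Cell × Cell)) :
    (pav ms bs).1 ≠ (pav ms bs).2 ∧ (pav ms bs).1 ∉ markedCells ms bs ∧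
    (pav ms bs).2 ∉ markedCells ms bs ∧
    ∀ c, (c = ((ms.getLastD (0, 0)).1 + 1, (ms.getLastD (0, 0)).2) ∨
          c = ((ms.getLastD (0, 0)).1 - 1, (ms.getLastD (0, 0)).2)) →
      c ∉ markedCells ms bs → (c = (pav ms bs).1 ∨ c = (pav ms bs).2) :=
  Classical.choose_spec (pavEx ms bs)

lemma pav_legal : BLegal pav := fun ms bs =>
  ⟨(pav_spec ms bs).1, (pav_spec ms bs).2.1, (pav_spec ms bs).2.2.1⟩

lemma marked_sub_m (ms l : List Cell) (bs : List (Cell × Cell)) :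
    markedCells ms bs ⊆ markedCells (ms ++ l) bs := by
  rintro c (h | h)
  · exact Or.inl (List.mem_append_left _ h)
  · exact Or.inr h

lemma marked_sub_b (ms : List Cell) (bs l : List (Cell × Cell)) :
    markedCells ms bs ⊆ markedCells ms (bs ++ l) := by
  rintro c (h | ⟨p, hp, h⟩)
  · exact Or.inl h
  · exact Or.inr ⟨p, List.mem_append_left _ hp, h⟩

lemma marked_play_step (σ : MStrategy) (τ : BStrategy) (k : ℕ) :
    markedCells (play σ τ k).1 (play σ τ k).2 ⊆
      markedCells (play σ τ (k + 1)).1 (play σ τ (k + 1)).2 := by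
  intro c hc
  exact marked_sub_b _ _ _ (marked_sub_m _ _ _ hc)

lemma marked_play_mono (σ : MStrategy) (τ : BStrategy) {m n : ℕ} (h : m ≤ n) :
    markedCells (play σ τ m).1 (play σ τ m).2 ⊆
      markedCells (play σ τ n).1 (play σ τ n).2 := by
  induction h with
  | refl => exact subset_rfl
  | step h ih => exact ih.trans (marked_play_step σ τ _)

lemma mem_play (σ : MStrategy) (τ : BStrategy) (n : ℕ) {a : Cell}
    (h : a ∈ (play σ τ n).1) :
    ∃ j < n, a = σ (play σ τ j).1 (play σ τ j).2 := by
  induction n with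
  | zero => simp [play] at h
  | succ k ih =>
      have h' : a ∈ (play σ τ k).1 ++ [σ (play σ τ k).1 (play σ τ k).2] := h
      rcases List.mem_append.1 h' with h'' | h''
      · obtain ⟨j, hj, hja⟩ := ih h''
        exact ⟨j, Nat.lt_succ_of_lt hj, hja⟩
      · exact ⟨k, Nat.lt_succ_self k, by simpa using h''⟩

lemma no_horiz_aux (σ : MStrategy) (hσ : MLegal σ) {i j : ℕ} (hij : i < j)
    {a b : Cell} (ea : a = σ (play σ pav i).1 (play σ pav i).2)
    (eb : b = σ (play σ pav j).1 (play σ pav j).2)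
    (h2 : a.2 = b.2) (h1 : (a.1 - b.1).natAbs = 1) : False := by
  have hbnot : b ∉ markedCells (play σ pav j).1 (play σ pav j).2 := eb ▸ hσ _ _
  set ms := (play σ pav i).1 with hms
  set bs := (play σ pav i).2 with hbs
  have hstep1 : (play σ pav (i + 1)).1 = ms ++ [a] := by rw [ea]; rfl
  have hstep2 : (play σ pav (i + 1)).2 = bs ++ [pav (ms ++ [a]) bs] := by rw [ea]; rfl
  have hmono : markedCells (play σ pav (i + 1)).1 (play σ pav (i + 1)).2 ⊆
      markedCells (play σ pav j).1 (play σ pav j).2 := marked_play_mono σ pav hij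
  have hb1 : b ∉ markedCells (ms ++ [a]) bs := by
    intro hmem
    exact hbnot (hmono (by rw [hstep1, hstep2]; exact marked_sub_b _ _ _ hmem))
  have hgl : (ms ++ [a]).getLastD (0, 0) = a := by
    simp [List.getLastD_eq_getLast?, List.getLast?_concat]
  have hcases : b = (a.1 + 1, a.2) ∨ b = (a.1 - 1, a.2) := by
    have hd : a.1 - b.1 = 1 ∨ a.1 - b.1 = -1 := by omega
    rcases hd with hd | hd
    · exact Or.inr (Prod.ext_iff.mpr ⟨by omega, h2.symm⟩)
    · exact Or.inl (Prod.ext_iff.mpr ⟨by omega, h2.symm⟩)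
  have hcov := (pav_spec (ms ++ [a]) bs).2.2.2 b (by rw [hgl]; exact hcases) hb1
  have hbm : b ∈ markedCells (play σ pav (i + 1)).1 (play σ pav (i + 1)).2 := by
    rw [hstep1, hstep2]
    exact Or.inr ⟨pav (ms ++ [a]) bs, by simp, hcov⟩
  exact hbnot (hmono hbm)

lemma no_horiz (σ : MStrategy) (hσ : MLegal σ) (n : ℕ)
    {a b : Cell} (ha : a ∈ (play σ pav n).1) (hb : b ∈ (play σ pav n).1)
    (h2 : a.2 = b.2) (h1 : (a.1 - b.1).natAbs = 1) : False := by
  obtain ⟨i, hi, ea⟩ := mem_play σ pav n ha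
  obtain ⟨j, hj, eb⟩ := mem_play σ pav n hb
  rcases lt_trichotomy i j with h | h | h
  · exact no_horiz_aux σ hσ h ea eb h2 h1
  · subst h
    have : a = b := ea.trans eb.symm
    subst this
    omega
  · exact no_horiz_aux σ hσ h eb ea h2.symm (by omega)

/-! ### Polyomino geometry lemmas -/

lemma adjacent_symm {x y : Cell} (h : Adjacent x y) : Adjacent y x := by
  simp only [Adjacent] at *; omega

lemma isSym_adj {f : Cell → Cell} (hf : IsSym f) {x y : Cell} (h : Adjacent x y) :
    Adjacent (f x) (f y) := by
  obtain ⟨t, a, b, s, hfp⟩ := hf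
  simp only [Adjacent] at *
  rw [hfp x, hfp y]
  cases a <;> cases b <;> cases s <;> simp <;> omega

lemma isPolyomino_image {f : Cell → Cell} {P : Set Cell} (hf : IsSym f)
    (hP : IsPolyomino P) : IsPolyomino (f '' P) := by
  refine ⟨hP.1.image f, ?_⟩
  rintro _ ⟨a, ha, rfl⟩ _ ⟨b, hb, rfl⟩
  have h := hP.2 a ha b hb
  clear hb
  induction h with
  | refl => exact .refl
  | tail hac hstep ih =>
      exact ih.tail ⟨⟨_, hstep.1, rfl⟩, ⟨_, hstep.2.1, rfl⟩, isSym_adj hf hstep.2.2⟩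

lemma skinny_image {f : Cell → Cell} {P : Set Cell} (hf : IsSym f)
    (h : Skinny (f '' P)) : Skinny P := by
  obtain ⟨t, a, b, s, hfp⟩ := hf
  rcases h with ⟨r, hr⟩ | ⟨r, hr⟩
  · have key : ∀ q ∈ P, t.2 + (if b then (if s then q.1 else q.2)
        else -(if s then q.1 else q.2)) = r := by
      intro q hq
      have := hr (f q) ⟨q, hq, rfl⟩
      rw [hfp q] at this
      simpa using this
    cases s
    · simp only [Bool.false_eq_true, if_false] at key
      refine Or.inl ?_
      cases b
      · exact ⟨t.2 - r, fun q hq => by have := key q hq; simp at this; omega⟩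
      · exact ⟨r - t.2, fun q hq => by have := key q hq; simp at this; omega⟩
    · simp only [if_true] at key
      refine Or.inr ?_
      cases b
      · exact ⟨t.2 - r, fun q hq => by have := key q hq; simp at this; omega⟩
      · exact ⟨r - t.2, fun q hq => by have := key q hq; simp at this; omega⟩
  · have key : ∀ q ∈ P, t.1 + (if a then (if s then q.2 else q.1)
        else -(if s then q.2 else q.1)) = r := by
      intro q hq
      have := hr (f q) ⟨q, hq, rfl⟩
      rw [hfp q] at this
      simpa using this
    cases s
    · simp only [Bool.false_eq_true, if_false] at key
      refine Or.inr ?_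
      cases a
      · exact ⟨t.1 - r, fun q hq => by have := key q hq; simp at this; omega⟩
      · exact ⟨r - t.1, fun q hq => by have := key q hq; simp at this; omega⟩
    · simp only [if_true] at key
      refine Or.inl ?_
      cases a
      · exact ⟨t.1 - r, fun q hq => by have := key q hq; simp at this; omega⟩
      · exact ⟨r - t.1, fun q hq => by have := key q hq; simp at this; omega⟩

lemma horiz_edge {S : Set Cell} (hS : IsPolyomino S) {a b : Cell}
    (ha : a ∈ S) (hb : b ∈ S) (hne : a.1 ≠ b.1) :
    ∃ x ∈ S, ∃ y ∈ S, x.2 = y.2 ∧ (x.1 - y.1).natAbs = 1 := by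
  have h := hS.2 a ha b hb
  clear hb
  have claim : a.1 = b.1 ∨ ∃ x ∈ S, ∃ y ∈ S, x.2 = y.2 ∧ (x.1 - y.1).natAbs = 1 := by
    clear hne
    induction h with
    | refl => exact Or.inl rfl
    | @tail c d hac hstep ih =>
        rcases ih with heq | hed
        · obtain ⟨hcS, hdS, hadj⟩ := hstep
          simp only [Adjacent] at hadj
          by_cases hx : c.1 = d.1
          · exact Or.inl (heq.trans hx)
          · exact Or.inr ⟨c, hcS, d, hdS, by omega, by omega⟩
        · exact Or.inr hed
  rcases claim with h | h
  · exact absurd h hne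
  · exact h

lemma isPolyomino_of_base {S : Set Cell} (a : Cell) (ha : a ∈ S)
    (h : ∀ x ∈ S, Relation.ReflTransGen (fun x y => x ∈ S ∧ y ∈ S ∧ Adjacent x y) a x) :
    IsPolyomino S := by
  have hsym : Symmetric (fun x y : Cell => x ∈ S ∧ y ∈ S ∧ Adjacent x y) :=
    fun x y hxy => ⟨hxy.2.1, hxy.1, adjacent_symm hxy.2.2⟩
  exact ⟨⟨a, ha⟩, fun x hx y hy =>
    ((@Relation.ReflTransGen.symmetric _ _ ⟨fun _ _ h => hsym h⟩).symm _ _ (h x hx)).trans (h y hy)⟩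

lemma path_subset {P : Set Cell} {a b : Cell}
    (h : Relation.ReflTransGen (fun x y => x ∈ P ∧ y ∈ P ∧ Adjacent x y) a b)
    (ha : a ∈ P) :
    ∃ S : Set Cell, S.Finite ∧ a ∈ S ∧ b ∈ S ∧ S ⊆ P ∧
      ∀ x ∈ S, Relation.ReflTransGen (fun x y => x ∈ S ∧ y ∈ S ∧ Adjacent x y) a x := by
  induction h with
  | refl =>
      exact ⟨{a}, Set.finite_singleton a, rfl, rfl, by simpa using ha,
        by rintro x rfl; exact .refl⟩
  | @tail c d hac hstep ih =>
      obtain ⟨S, hSfin, haS, hcS, hSP, hconn⟩ := ih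
      have mono : ∀ x y : Cell,
          Relation.ReflTransGen (fun x y => x ∈ S ∧ y ∈ S ∧ Adjacent x y) x y →
          Relation.ReflTransGen
            (fun x y => x ∈ insert d S ∧ y ∈ insert d S ∧ Adjacent x y) x y :=
        fun x y hxy => Relation.ReflTransGen.mono
          (p := fun x y => x ∈ insert d S ∧ y ∈ insert d S ∧ Adjacent x y) (fun u v huv =>
          ⟨Set.mem_insert_of_mem _ huv.1, Set.mem_insert_of_mem _ huv.2.1, huv.2.2⟩) _ _ hxy
      refine ⟨insert d S, hSfin.insert d, Set.mem_insert_of_mem _ haS,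
        Set.mem_insert _ _, ?_, ?_⟩
      · rintro x (rfl | hx)
        · exact hstep.2.1
        · exact hSP hx
      · rintro x (rfl | hx)
        · exact (mono _ _ (hconn c hcS)).tail
            ⟨Set.mem_insert_of_mem _ hcS, Set.mem_insert _ _, hstep.2.2⟩
        · exact mono _ _ (hconn x hx)

lemma exists_finite_nonskinny {P : Set Cell} (hP : IsPolyomino P) (hns : ¬ Skinny P) :
    ∃ S, S ⊆ P ∧ S.Finite ∧ IsPolyomino S ∧ ¬ Skinny S := by
  obtain ⟨p0, hp0⟩ := hP.1
  have hrow : ∃ q ∈ P, q.2 ≠ p0.2 := by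
    by_contra hc
    push_neg at hc
    exact hns (Or.inl ⟨p0.2, hc⟩)
  have hcol : ∃ q ∈ P, q.1 ≠ p0.1 := by
    by_contra hc
    push_neg at hc
    exact hns (Or.inr ⟨p0.1, hc⟩)
  obtain ⟨q, hq, hq2⟩ := hrow
  obtain ⟨q', hq', hq1⟩ := hcol
  obtain ⟨S1, hS1fin, hp0S1, hqS1, hS1P, hconn1⟩ := path_subset (hP.2 p0 hp0 q hq) hp0
  obtain ⟨S2, hS2fin, hp0S2, hq'S2, hS2P, hconn2⟩ := path_subset (hP.2 p0 hp0 q' hq') hp0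
  set S := S1 ∪ S2 with hSdef
  have hsub : S ⊆ P := Set.union_subset hS1P hS2P
  have hconn : ∀ x ∈ S,
      Relation.ReflTransGen (fun x y => x ∈ S ∧ y ∈ S ∧ Adjacent x y) p0 x := by
    rintro x (hx | hx)
    · exact Relation.ReflTransGen.mono (p := fun x y => x ∈ S ∧ y ∈ S ∧ Adjacent x y) (fun u v huv =>
        ⟨Or.inl huv.1, Or.inl huv.2.1, huv.2.2⟩) _ _ (hconn1 x hx)
    · exact Relation.ReflTransGen.mono (p := fun x y => x ∈ S ∧ y ∈ S ∧ Adjacent x y) (fun u v huv =>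
        ⟨Or.inr huv.1, Or.inr huv.2.1, huv.2.2⟩) _ _ (hconn2 x hx)
  refine ⟨S, hsub, hS1fin.union hS2fin, isPolyomino_of_base p0 (Or.inl hp0S1) hconn, ?_⟩
  rintro (⟨r, hr⟩ | ⟨c, hc⟩)
  · exact hq2 ((hr q (Or.inl hqS1)).trans (hr p0 (Or.inl hp0S1)).symm)
  · exact hq1 ((hc q' (Or.inr hq'S2)).trans (hc p0 (Or.inl hp0S1)).symm)

lemma id_isSym : IsSym (id : Cell → Cell) :=
  ⟨(0, 0), true, true, false, fun p => by simp⟩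

lemma congruent_refl (P : Set Cell) : CellCongruent P P :=
  ⟨id, id_isSym, Set.image_id P⟩

lemma loser_of_nonskinny (G : Set (Set Cell))
    (hG : ∀ Q ∈ G, IsPolyomino Q ∧ ¬ Skinny Q) : ¬ GameWinner G := by
  rintro ⟨σ, hσ, hwin⟩
  obtain ⟨n, Q, hQG, S, hSsub, f, hf, hfQ⟩ := hwin pav pav_legal
  obtain ⟨hQpoly, hQns⟩ := hG Q hQG
  have hSpoly : IsPolyomino S := hfQ ▸ isPolyomino_image hf hQpoly
  have hSns : ¬ Skinny S := fun hs => hQns (skinny_image hf (hfQ ▸ hs))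
  obtain ⟨p0, hp0⟩ := hSpoly.1
  have hcol : ∃ q ∈ S, q.1 ≠ p0.1 := by
    by_contra hc
    push_neg at hc
    exact hSns (Or.inr ⟨p0.1, hc⟩)
  obtain ⟨q, hq, hq1⟩ := hcol
  obtain ⟨x, hx, y, hy, hxy2, hxy1⟩ := horiz_edge hSpoly hq hp0 hq1
  exact no_horiz σ hσ n (hSsub hx) (hSsub hy) hxy2 hxy1

end Aux

/-- every winning team contains a skinny polyomino. -/
theorem stmt10 (F : Set (Set Cell)) (hF : IsTeam F) (hw : Winner F) :
    ∃ P ∈ F, Skinny P := by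
  by_contra hcon
  push_neg at hcon
  rcases hw with ⟨hb, hgw⟩ | ⟨hnb, hres⟩
  · exact loser_of_nonskinny F (fun Q hQ => ⟨hF.1 Q hQ, hcon Q hQ⟩) hgw
  · have hch : ∀ P ∈ F, ∃ S, S ⊆ P ∧ S.Finite ∧ IsPolyomino S ∧ ¬ Skinny S :=
      fun P hP => exists_finite_nonskinny (hF.1 P hP) (hcon P hP)
    choose! g hg1 hg2 hg3 hg4 using hch
    have hBR : BoundedRestriction F (g '' F) :=
      ⟨g, fun P hP => ⟨hg2 P hP, hg3 P hP, ⟨g P, hg1 P hP, congruent_refl (g P)⟩⟩, rfl⟩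
    exact loser_of_nonskinny (g '' F)
      (fun Q hQ => by obtain ⟨P, hP, rfl⟩ := hQ; exact ⟨hg3 P hP, hg4 P hP⟩)
      (hres _ hBR)
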